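/- (Coherence bound in the CNN memorization model, part 1.) There exist absolute constants K, K₀ > 0 with the following property. In the signal-plus-noise Hessian model, let the noise vectors ξ_1,…,ξ_{n_r+n_f} be drawn i.i.d. from N(0, σ_n² I_d), set SNR = ‖μ‖/(σ_n √d), let the retain set consist of samples 1,…,n_r and the forget set of samples n_r+1,…,n_r+n_f, fix weights C'_r, C'_f > 0 with C'_r + C'_f = 1, and build the mix-coherence matrix S with entries S_{(r,f),(r',f')} = ‖D_{rf}^{1/2} D_{r'f'}^{1/2}‖_F where D_{rf} = C'_r H_r + C'_f H_f. Then for every δ ∈ (0,1), whenever n_r, n_f, d ≥ K₀ and d ≥ K₀ log((n_r + n_f)/δ), with probability at least 1 − 8δ over the noise draws, uniformly over all choices of labels y_i, weights ℓ''_i ∈ [0,1] and indicator bits: λ_max(S) ≤ K n_r n_f d σ_n² ( (√C'_r + √C'_f)² SNR² + (C'_r + C'_f) ). -/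

import Mathlib

open Matrix Filter Finset Set
open scoped BigOperators

noncomputable section

/-- Frobenius norm of a real square matrix. -/
def frob {n : Type*} [Fintype n] (M : Matrix n n ℝ) : ℝ :=
  Real.sqrt (∑ i, ∑ j, (M i j) ^ 2)

open Classical in
/-- The positive semidefinite square root of a matrix (junk value `0` on non-PSD input). -/
def psdSqrt {n : Type*} [Fintype n] [DecidableEq n] (A : Matrix n n ℝ) : Matrix n n ℝ :=
  if h : A.PosSemidef then
    h.1.eigenvectorUnitary.1 * diagonal (Real.sqrt ∘ h.1.eigenvalues) *
      (star h.1.eigenvectorUnitary : Matrix n n ℝ)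
  else 0

open Classical in
/-- The largest eigenvalue of a symmetric real matrix (junk value `0` otherwise). -/
def lamMax {n : Type*} [Fintype n] [DecidableEq n] (A : Matrix n n ℝ) : ℝ :=
  if h : A.IsHermitian then ⨆ i, h.eigenvalues i else 0

/-- Probability of observing the Bernoulli(B/n) selection pattern `x`. -/
def selProb (n B : ℕ) (x : Fin n → Bool) : ℝ :=
  ∏ i, if x i then (B : ℝ) / n else 1 - (B : ℝ) / n

/-- Average Hessian of a family. -/
def Hbar {d n : ℕ} (H : Fin n → Matrix (Fin d) (Fin d) ℝ) : Matrix (Fin d) (Fin d) ℝ :=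
  (n : ℝ)⁻¹ • ∑ i, H i

/-- Mean update operator `J = I − η(1−α)H_R + ηα H_F`. -/
def Jbar {d nr nf : ℕ} (η α : ℝ) (HR : Fin nr → Matrix (Fin d) (Fin d) ℝ)
    (HF : Fin nf → Matrix (Fin d) (Fin d) ℝ) : Matrix (Fin d) (Fin d) ℝ :=
  1 - (η * (1 - α)) • Hbar HR + (η * α) • Hbar HF

/-- Random update operator for the batch-selection pattern `x`. -/
def Jop {d nr nf : ℕ} (η α : ℝ) (B : ℕ) (HR : Fin nr → Matrix (Fin d) (Fin d) ℝ)
    (HF : Fin nf → Matrix (Fin d) (Fin d) ℝ)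
    (x : (Fin nr → Bool) × (Fin nf → Bool)) : Matrix (Fin d) (Fin d) ℝ :=
  1 - (η * (1 - α) / B) • (∑ r, if x.1 r then HR r else 0)
    + (η * α / B) • (∑ f, if x.2 f then HF f else 0)

/-- `C_r = η²(1−α)²(1/n_r)(1/B − 1/n_r)`. -/
def Crc (η α : ℝ) (B nr : ℕ) : ℝ :=
  η ^ 2 * (1 - α) ^ 2 * (nr : ℝ)⁻¹ * ((B : ℝ)⁻¹ - (nr : ℝ)⁻¹)

/-- `C_f = η²α²(1/n_f)(1/B − 1/n_f)`. -/
def Cfc (η α : ℝ) (B nf : ℕ) : ℝ :=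
  η ^ 2 * α ^ 2 * (nf : ℝ)⁻¹ * ((B : ℝ)⁻¹ - (nf : ℝ)⁻¹)

/-- Noise-accumulation matrices `N_k`. -/
def Nmat {d nr nf : ℕ} (η α : ℝ) (B : ℕ) (HR : Fin nr → Matrix (Fin d) (Fin d) ℝ)
    (HF : Fin nf → Matrix (Fin d) (Fin d) ℝ) : ℕ → Matrix (Fin d) (Fin d) ℝ
  | 0 => 1
  | k + 1 =>
      Cfc η α B nf • ∑ f, HF f * Nmat η α B HR HF k * HF f
        + Crc η α B nr • ∑ r, HR r * Nmat η α B HR HF k * HR r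

/-- `W_k = J_{k−1} ⋯ J_1 J_0` for a finite sequence of batch selections. -/
def Wk {d nr nf : ℕ} (η α : ℝ) (B : ℕ) (HR : Fin nr → Matrix (Fin d) (Fin d) ℝ)
    (HF : Fin nf → Matrix (Fin d) (Fin d) ℝ) {k : ℕ}
    (s : Fin k → (Fin nr → Bool) × (Fin nf → Bool)) : Matrix (Fin d) (Fin d) ℝ :=
  (List.ofFn fun i => Jop η α B HR HF (s i)).reverse.prod

/-- `E‖w_k‖² = E Tr(W_k W_kᵀ)`, the expectation taken over the i.i.d. Bernoulli
batch selections of the `k` steps. -/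
def Ewk2 {d nr nf : ℕ} (η α : ℝ) (B : ℕ) (HR : Fin nr → Matrix (Fin d) (Fin d) ℝ)
    (HF : Fin nf → Matrix (Fin d) (Fin d) ℝ) (k : ℕ) : ℝ :=
  ∑ s : Fin k → (Fin nr → Bool) × (Fin nf → Bool),
    (∏ i, selProb nr B (s i).1 * selProb nf B (s i).2) *
      (Wk η α B HR HF s * (Wk η α B HR HF s)ᵀ).trace

/-- `E[(e₁ᵀ w_k)²]`, i.e. the `(i0,i0)` entry of `E[W_k W_kᵀ]`. -/
def Ee1 {d nr nf : ℕ} (η α : ℝ) (B : ℕ) (HR : Fin nr → Matrix (Fin d) (Fin d) ℝ)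
    (HF : Fin nf → Matrix (Fin d) (Fin d) ℝ) (i0 : Fin d) (k : ℕ) : ℝ :=
  ∑ s : Fin k → (Fin nr → Bool) × (Fin nf → Bool),
    (∏ i, selProb nr B (s i).1 * selProb nf B (s i).2) *
      ((Wk η α B HR HF s * (Wk η α B HR HF s)ᵀ) i0 i0)

/-- Mixed Hessian `D_{rf} = C'_r H_r^R + C'_f H_f^F` for a retain/forget pair. -/
def Drf {d nr nf : ℕ} (Cr' Cf' : ℝ) (HR : Fin nr → Matrix (Fin d) (Fin d) ℝ)
    (HF : Fin nf → Matrix (Fin d) (Fin d) ℝ) (p : Fin nr × Fin nf) :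
    Matrix (Fin d) (Fin d) ℝ :=
  Cr' • HR p.1 + Cf' • HF p.2

/-- Mix-Hessian `D = (1/(n_r n_f)) Σ_{r,f} D_{rf}`. -/
def Dmix {d nr nf : ℕ} (Cr' Cf' : ℝ) (HR : Fin nr → Matrix (Fin d) (Fin d) ℝ)
    (HF : Fin nf → Matrix (Fin d) (Fin d) ℝ) : Matrix (Fin d) (Fin d) ℝ :=
  ((nr : ℝ) * nf)⁻¹ • ∑ p : Fin nr × Fin nf, Drf Cr' Cf' HR HF p

/-- Mix-coherence matrix `S_{(r,f),(r',f')} = ‖D_{rf}^{1/2} D_{r'f'}^{1/2}‖_F`. -/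
def Smat {d nr nf : ℕ} (Cr' Cf' : ℝ) (HR : Fin nr → Matrix (Fin d) (Fin d) ℝ)
    (HF : Fin nf → Matrix (Fin d) (Fin d) ℝ) :
    Matrix (Fin nr × Fin nf) (Fin nr × Fin nf) ℝ :=
  Matrix.of fun p q =>
    frob (psdSqrt (Drf Cr' Cf' HR HF p) * psdSqrt (Drf Cr' Cf' HR HF q))

/-- Unlearning coherence `σ = λ_max(S) / max_{(r,f)} λ_max(D_{rf})`. -/
def cohSigma {d nr nf : ℕ} (Cr' Cf' : ℝ) (HR : Fin nr → Matrix (Fin d) (Fin d) ℝ)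
    (HF : Fin nf → Matrix (Fin d) (Fin d) ℝ) : ℝ :=
  lamMax (Smat Cr' Cf' HR HF) / ⨆ p : Fin nr × Fin nf, lamMax (Drf Cr' Cf' HR HF p)

/-- Stacked filter-weight vector of the two-layer ReLU CNN signal-plus-noise model. -/
def wvec (d mfil : ℕ) (μ ξi : Fin d → ℝ) (yi : ℝ)
    (ai bi : Bool → Fin mfil → Bool) : (Bool × Fin mfil) × Fin d → ℝ :=
  fun p =>
    ((if p.1.1 then (1 : ℝ) else -1) / mfil) *
      ((if ai p.1.1 p.1.2 then (1 : ℝ) else 0) * μ p.2 +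
        (if bi p.1.1 p.1.2 then (1 : ℝ) else 0) * yi * ξi p.2)

/-- Per-sample Hessian `H_i = ℓ''_i w_i w_iᵀ` of the signal-plus-noise model. -/
def hessCNN (d mfil : ℕ) (μ ξi : Fin d → ℝ) (yi ℓi : ℝ)
    (ai bi : Bool → Fin mfil → Bool) :
    Matrix ((Bool × Fin mfil) × Fin d) ((Bool × Fin mfil) × Fin d) ℝ :=
  ℓi • vecMulVec (wvec d mfil μ ξi yi ai bi) (wvec d mfil μ ξi yi ai bi)

/-- Mixed Hessian `D_{rf} = C'_r H_r + C'_f H_{n_r+f}` in the CNN model, with the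
retain set given by the first `n_r` samples and the forget set by the last `n_f`. -/
def DrfCNN (d mfil nr nf : ℕ) (μ : Fin d → ℝ) (ξ : Fin (nr + nf) → Fin d → ℝ)
    (y ℓ : Fin (nr + nf) → ℝ) (a b : Fin (nr + nf) → Bool → Fin mfil → Bool)
    (Cr' Cf' : ℝ) (p : Fin nr × Fin nf) :
    Matrix ((Bool × Fin mfil) × Fin d) ((Bool × Fin mfil) × Fin d) ℝ :=
  Cr' • hessCNN d mfil μ (ξ (Fin.castAdd nf p.1)) (y (Fin.castAdd nf p.1))
        (ℓ (Fin.castAdd nf p.1)) (a (Fin.castAdd nf p.1)) (b (Fin.castAdd nf p.1))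
    + Cf' • hessCNN d mfil μ (ξ (Fin.natAdd nr p.2)) (y (Fin.natAdd nr p.2))
        (ℓ (Fin.natAdd nr p.2)) (a (Fin.natAdd nr p.2)) (b (Fin.natAdd nr p.2))

/-- Mix-coherence matrix of the CNN model. -/
def SmatCNN (d mfil nr nf : ℕ) (μ : Fin d → ℝ) (ξ : Fin (nr + nf) → Fin d → ℝ)
    (y ℓ : Fin (nr + nf) → ℝ) (a b : Fin (nr + nf) → Bool → Fin mfil → Bool)
    (Cr' Cf' : ℝ) : Matrix (Fin nr × Fin nf) (Fin nr × Fin nf) ℝ :=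
  Matrix.of fun p q =>
    frob (psdSqrt (DrfCNN d mfil nr nf μ ξ y ℓ a b Cr' Cf' p) *
      psdSqrt (DrfCNN d mfil nr nf μ ξ y ℓ a b Cr' Cf' q))

/-! ### Auxiliary deterministic lemmas -/

section DetHelpers

variable {n : Type*} [Fintype n]

lemma frob_nonneg (M : Matrix n n ℝ) : 0 ≤ frob M := Real.sqrt_nonneg _

lemma frob_sq (M : Matrix n n ℝ) : frob M ^ 2 = ∑ i, ∑ j, (M i j) ^ 2 :=
  Real.sq_sqrt (by positivity)

lemma frob_transpose (M : Matrix n n ℝ) : frob Mᵀ = frob M := by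
  unfold frob
  rw [Finset.sum_comm]
  rfl

lemma frob_mul_le (M N : Matrix n n ℝ) : frob (M * N) ≤ frob M * frob N := by
  have h1 : frob (M * N) ^ 2 ≤ (frob M * frob N) ^ 2 := by
    rw [frob_sq, mul_pow, frob_sq, frob_sq]
    calc ∑ i, ∑ j, ((M * N) i j) ^ 2
        ≤ ∑ i, ∑ j, (∑ k, (M i k) ^ 2) * (∑ k, (N k j) ^ 2) := by
          refine Finset.sum_le_sum fun i _ => Finset.sum_le_sum fun j _ => ?_
          simpa [Matrix.mul_apply] using
            Finset.sum_mul_sq_le_sq_mul_sq Finset.univ (fun k => M i k) (fun k => N k j)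
      _ = (∑ i, ∑ k, (M i k) ^ 2) * (∑ k, ∑ j, (N k j) ^ 2) := by
          have hcomm : (∑ k, ∑ j, (N k j) ^ 2) = ∑ j, ∑ k, (N k j) ^ 2 :=
            Finset.sum_comm
          rw [hcomm, ← Finset.sum_mul_sum]
  have h2 : 0 ≤ frob M * frob N := mul_nonneg (frob_nonneg M) (frob_nonneg N)
  nlinarith [frob_nonneg (M * N)]

variable [DecidableEq n]

lemma psdSqrt_eq {A : Matrix n n ℝ} (hA : A.PosSemidef) : psdSqrt A =
    hA.1.eigenvectorUnitary.1 * diagonal (Real.sqrt ∘ hA.1.eigenvalues) *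
      (star hA.1.eigenvectorUnitary : Matrix n n ℝ) := dif_pos hA

lemma psdSqrt_posSemidef {A : Matrix n n ℝ} (hA : A.PosSemidef) :
    (psdSqrt A).PosSemidef := by
  rw [psdSqrt_eq hA]
  have hD : (diagonal (Real.sqrt ∘ hA.1.eigenvalues)).PosSemidef :=
    PosSemidef.diagonal (fun i => Real.sqrt_nonneg _)
  have := hD.mul_mul_conjTranspose_same (hA.1.eigenvectorUnitary : Matrix n n ℝ)
  rwa [Matrix.star_eq_conjTranspose]

lemma psdSqrt_mul_self {A : Matrix n n ℝ} (hA : A.PosSemidef) :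
    psdSqrt A * psdSqrt A = A := by
  rw [psdSqrt_eq hA]
  have hU : (star hA.1.eigenvectorUnitary : Matrix n n ℝ) * hA.1.eigenvectorUnitary.1 = 1 :=
    Unitary.coe_star_mul_self _
  have hDD : diagonal (Real.sqrt ∘ hA.1.eigenvalues) * diagonal (Real.sqrt ∘ hA.1.eigenvalues)
      = Matrix.diagonal (RCLike.ofReal ∘ hA.1.eigenvalues : n → ℝ) := by
    rw [diagonal_mul_diagonal]
    congr 1
    funext i
    simp only [Function.comp_apply, RCLike.ofReal_real_eq_id, id]
    exact Real.mul_self_sqrt (hA.eigenvalues_nonneg i)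
  conv_rhs => rw [hA.1.spectral_theorem, Unitary.conjStarAlgAut_apply]
  calc _ = hA.1.eigenvectorUnitary.1 * (diagonal (Real.sqrt ∘ hA.1.eigenvalues) *
        ((star hA.1.eigenvectorUnitary : Matrix n n ℝ) * hA.1.eigenvectorUnitary.1) *
        diagonal (Real.sqrt ∘ hA.1.eigenvalues)) *
        (star hA.1.eigenvectorUnitary : Matrix n n ℝ) := by simp only [Matrix.mul_assoc]
    _ = _ := by rw [hU, Matrix.mul_one, hDD]

lemma psdSqrt_transpose {A : Matrix n n ℝ} (hA : A.PosSemidef) :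
    (psdSqrt A)ᵀ = psdSqrt A := by
  have h := (psdSqrt_posSemidef hA).1
  rwa [Matrix.IsHermitian, Matrix.conjTranspose_eq_transpose_of_trivial] at h

lemma frob_sq_psdSqrt {A : Matrix n n ℝ} (hA : A.PosSemidef) :
    frob (psdSqrt A) ^ 2 = A.trace := by
  have hR : ∀ i k, psdSqrt A k i = psdSqrt A i k := by
    intro i k
    have := congrFun (congrFun (psdSqrt_transpose hA) k) i
    simpa [Matrix.transpose_apply] using this.symm
  rw [frob_sq]
  conv_rhs => rw [← psdSqrt_mul_self hA]
  rw [Matrix.trace]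
  refine Finset.sum_congr rfl fun i _ => ?_
  simp only [Matrix.diag_apply, Matrix.mul_apply]
  exact Finset.sum_congr rfl fun k _ => by rw [hR i k]; ring

lemma trace_nonneg_of_posSemidef {A : Matrix n n ℝ} (hA : A.PosSemidef) :
    0 ≤ A.trace := by
  rw [← frob_sq_psdSqrt hA]; positivity

lemma frob_psdSqrt {A : Matrix n n ℝ} (hA : A.PosSemidef) :
    frob (psdSqrt A) = Real.sqrt A.trace := by
  rw [← frob_sq_psdSqrt hA, Real.sqrt_sq (frob_nonneg _)]

lemma frob_psdSqrt_mul_le {A B : Matrix n n ℝ} (hA : A.PosSemidef) (hB : B.PosSemidef)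
    {T : ℝ} (hTA : A.trace ≤ T) (hTB : B.trace ≤ T) :
    frob (psdSqrt A * psdSqrt B) ≤ T := by
  have hT : 0 ≤ T := le_trans (trace_nonneg_of_posSemidef hA) hTA
  calc frob (psdSqrt A * psdSqrt B) ≤ frob (psdSqrt A) * frob (psdSqrt B) :=
        frob_mul_le _ _
    _ = Real.sqrt A.trace * Real.sqrt B.trace := by
        rw [frob_psdSqrt hA, frob_psdSqrt hB]
    _ ≤ Real.sqrt T * Real.sqrt T :=
        mul_le_mul (Real.sqrt_le_sqrt hTA) (Real.sqrt_le_sqrt hTB) (Real.sqrt_nonneg _)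
          (Real.sqrt_nonneg _)
    _ = T := Real.mul_self_sqrt hT

omit [DecidableEq n] in
lemma posSemidef_vecMulVec (w : n → ℝ) : (Matrix.vecMulVec w w).PosSemidef := by
  simpa using Matrix.posSemidef_vecMulVec_self_star w

omit [DecidableEq n] in
lemma posSemidef_smul_real {M : Matrix n n ℝ} (hM : M.PosSemidef) {c : ℝ} (hc : 0 ≤ c) :
    (c • M).PosSemidef := hM.smul hc

lemma lamMax_le_of_abs_entries_le [Nonempty n] {A : Matrix n n ℝ} (hA : A.IsHermitian)
    {T : ℝ} (hT : 0 ≤ T) (h : ∀ p q, |A p q| ≤ T) :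
    lamMax A ≤ (Fintype.card n : ℝ) * T := by
  have hlam : lamMax A = ⨆ i, hA.eigenvalues i := dif_pos hA
  rw [hlam]
  refine ciSup_le fun k => ?_
  set v : n → ℝ := ⇑(hA.eigenvectorBasis k) with hv_def
  have hv : A *ᵥ v = hA.eigenvalues k • v := hA.mulVec_eigenvectorBasis k
  have hvnorm : ‖hA.eigenvectorBasis k‖ = 1 := (hA.eigenvectorBasis).orthonormal.1 k
  have hvne : ∃ q, v q ≠ 0 := by
    by_contra hall
    push_neg at hall
    have : hA.eigenvectorBasis k = 0 := by
      ext q; exact hall q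
    rw [this, norm_zero] at hvnorm
    exact one_ne_zero hvnorm.symm
  obtain ⟨q0, hq0⟩ := hvne
  obtain ⟨p, -, hp⟩ := Finset.exists_max_image Finset.univ (fun i => |v i|) ⟨q0, Finset.mem_univ q0⟩
  have hvp : 0 < |v p| := lt_of_lt_of_le (abs_pos.mpr hq0) (hp q0 (Finset.mem_univ q0))
  have heig : hA.eigenvalues k * v p = ∑ q, A p q * v q := by
    have := congrFun hv p
    simp only [Matrix.mulVec, dotProduct, Pi.smul_apply, smul_eq_mul] at this
    rw [← this]
  have habs : |hA.eigenvalues k| * |v p| ≤ (Fintype.card n : ℝ) * T * |v p| := by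
    calc |hA.eigenvalues k| * |v p| = |hA.eigenvalues k * v p| := (abs_mul _ _).symm
      _ = |∑ q, A p q * v q| := by rw [heig]
      _ ≤ ∑ q, |A p q * v q| := Finset.abs_sum_le_sum_abs _ _
      _ ≤ ∑ _q : n, T * |v p| := by
          refine Finset.sum_le_sum fun q _ => ?_
          rw [abs_mul]
          exact mul_le_mul (h p q) (hp q (Finset.mem_univ q)) (abs_nonneg _) hT
      _ = (Fintype.card n : ℝ) * T * |v p| := by
          rw [Finset.sum_const, Finset.card_univ, nsmul_eq_mul]; ring
  have := le_of_mul_le_mul_right habs hvp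
  exact le_trans (le_abs_self _) this

end DetHelpers

/-! ### CNN-specific deterministic lemmas -/

section CNNHelpers

lemma hessCNN_posSemidef (d mfil : ℕ) (μ ξi : Fin d → ℝ) (yi : ℝ) {ℓi : ℝ} (hℓ : 0 ≤ ℓi)
    (ai bi : Bool → Fin mfil → Bool) :
    (hessCNN d mfil μ ξi yi ℓi ai bi).PosSemidef :=
  posSemidef_smul_real (posSemidef_vecMulVec _) hℓ

lemma sum_sq_wvec_le {d mfil : ℕ} (hm : 1 ≤ mfil) (μ ξi : Fin d → ℝ) {yi : ℝ}
    (hy : yi = 1 ∨ yi = -1) (ai bi : Bool → Fin mfil → Bool) :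
    ∑ p, (wvec d mfil μ ξi yi ai bi p) ^ 2 ≤ 4 * ((∑ c, μ c ^ 2) + ∑ c, ξi c ^ 2) := by
  have hm0 : (0:ℝ) < (mfil : ℝ) := by exact_mod_cast hm
  have key : ∀ p, (wvec d mfil μ ξi yi ai bi p) ^ 2
      ≤ (2 / (mfil : ℝ) ^ 2) * (μ p.2 ^ 2 + ξi p.2 ^ 2) := by
    intro p
    unfold wvec
    set A : ℝ := (if ai p.1.1 p.1.2 then (1 : ℝ) else 0) * μ p.2 with hA_def
    set B : ℝ := (if bi p.1.1 p.1.2 then (1 : ℝ) else 0) * yi * ξi p.2 with hB_def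
    have hs : ((if p.1.1 then (1:ℝ) else -1)) ^ 2 = 1 := by
      cases p.1.1 <;> norm_num
    have hA : A ^ 2 ≤ μ p.2 ^ 2 := by
      rw [hA_def]; split_ifs <;> simp [sq_nonneg]
    have hB : B ^ 2 ≤ ξi p.2 ^ 2 := by
      have hy2 : yi ^ 2 = 1 := by rcases hy with h | h <;> simp [h]
      rw [hB_def]; split_ifs
      · rw [one_mul, mul_pow, hy2, one_mul]
      · simpa using sq_nonneg (ξi p.2)
    have hAB : (A + B) ^ 2 ≤ 2 * (μ p.2 ^ 2 + ξi p.2 ^ 2) := by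
      nlinarith [sq_nonneg (A - B)]
    calc ((if p.1.1 then (1:ℝ) else -1) / mfil * (A + B)) ^ 2
        = (A + B) ^ 2 / (mfil : ℝ) ^ 2 := by
          rw [mul_pow, div_pow, hs]; ring
      _ ≤ 2 * (μ p.2 ^ 2 + ξi p.2 ^ 2) / (mfil : ℝ) ^ 2 := by gcongr
      _ = (2 / (mfil : ℝ) ^ 2) * (μ p.2 ^ 2 + ξi p.2 ^ 2) := by ring
  have hS : (0:ℝ) ≤ (∑ c, μ c ^ 2) + ∑ c, ξi c ^ 2 := by positivity
  calc ∑ p, (wvec d mfil μ ξi yi ai bi p) ^ 2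
      ≤ ∑ p : (Bool × Fin mfil) × Fin d, (2 / (mfil : ℝ) ^ 2) * (μ p.2 ^ 2 + ξi p.2 ^ 2) :=
        Finset.sum_le_sum fun p _ => key p
    _ = (2 * mfil) * ((2 / (mfil : ℝ) ^ 2) * ((∑ c, μ c ^ 2) + ∑ c, ξi c ^ 2)) := by
        rw [Fintype.sum_prod_type]
        have inner : (∑ c, (2 / (mfil:ℝ) ^ 2) * (μ c ^ 2 + ξi c ^ 2))
            = (2 / (mfil:ℝ) ^ 2) * ((∑ c, μ c ^ 2) + ∑ c, ξi c ^ 2) := by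
          rw [← Finset.mul_sum, Finset.sum_add_distrib]
        rw [Finset.sum_congr rfl fun u _ => inner, Finset.sum_const, Finset.card_univ,
          nsmul_eq_mul]
        simp only [Fintype.card_prod, Fintype.card_bool, Fintype.card_fin, Nat.cast_mul,
          Nat.cast_ofNat]
    _ = 4 * ((∑ c, μ c ^ 2) + ∑ c, ξi c ^ 2) / mfil := by
        field_simp
        ring
    _ ≤ 4 * ((∑ c, μ c ^ 2) + ∑ c, ξi c ^ 2) := by
        apply div_le_self (by positivity)
        exact_mod_cast hm

lemma trace_hessCNN_le {d mfil : ℕ} (hm : 1 ≤ mfil) (μ ξi : Fin d → ℝ) {yi ℓi : ℝ}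
    (hy : yi = 1 ∨ yi = -1) (hℓ : ℓi ∈ Set.Icc (0:ℝ) 1) (ai bi : Bool → Fin mfil → Bool) :
    (hessCNN d mfil μ ξi yi ℓi ai bi).trace ≤ 4 * ((∑ c, μ c ^ 2) + ∑ c, ξi c ^ 2) := by
  unfold hessCNN
  rw [Matrix.trace_smul]
  have htr : (Matrix.vecMulVec (wvec d mfil μ ξi yi ai bi)
      (wvec d mfil μ ξi yi ai bi)).trace = ∑ p, (wvec d mfil μ ξi yi ai bi p) ^ 2 := by
    simp [Matrix.trace, Matrix.diag, Matrix.vecMulVec_apply, sq]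
  rw [htr, smul_eq_mul]
  have h1 := sum_sq_wvec_le hm μ ξi hy ai bi
  have h2 : (0:ℝ) ≤ ∑ p, (wvec d mfil μ ξi yi ai bi p) ^ 2 := by positivity
  nlinarith [hℓ.1, hℓ.2]

lemma det_bound (d mfil nr nf : ℕ) (hm : 1 ≤ mfil) (hnr : 1 ≤ nr) (hnf : 1 ≤ nf)
    (μ : Fin d → ℝ) (σn : ℝ) (Cr' Cf' : ℝ) (hCr : 0 < Cr') (hCf : 0 < Cf')
    (hsum : Cr' + Cf' = 1) (ξv : Fin (nr + nf) → Fin d → ℝ)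
    (hξ : ∀ i, ∑ c, ξv i c ^ 2 ≤ 8 * σn ^ 2 * d)
    (y ℓ : Fin (nr + nf) → ℝ) (a b : Fin (nr + nf) → Bool → Fin mfil → Bool)
    (hy : ∀ i, y i = 1 ∨ y i = -1) (hℓ : ∀ i, ℓ i ∈ Set.Icc (0:ℝ) 1) :
    lamMax (SmatCNN d mfil nr nf μ ξv y ℓ a b Cr' Cf') ≤
      (nr : ℝ) * nf * (32 * ((∑ c, μ c ^ 2) + 8 * σn ^ 2 * d)) := by
  haveI : NeZero nr := ⟨Nat.one_le_iff_ne_zero.mp hnr⟩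
  haveI : NeZero nf := ⟨Nat.one_le_iff_ne_zero.mp hnf⟩
  set T : ℝ := 4 * ((∑ c, μ c ^ 2) + 8 * σn ^ 2 * d) with hT_def
  have hM2 : (0:ℝ) ≤ ∑ c, μ c ^ 2 := by positivity
  set D := DrfCNN d mfil nr nf μ ξv y ℓ a b Cr' Cf' with hD_def
  have hPSD : ∀ p, (D p).PosSemidef := by
    intro p
    exact (posSemidef_smul_real (hessCNN_posSemidef d mfil μ (ξv (Fin.castAdd nf p.1))
        (y (Fin.castAdd nf p.1)) (hℓ (Fin.castAdd nf p.1)).1 (a (Fin.castAdd nf p.1))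
        (b (Fin.castAdd nf p.1))) hCr.le).add
      (posSemidef_smul_real (hessCNN_posSemidef d mfil μ (ξv (Fin.natAdd nr p.2))
        (y (Fin.natAdd nr p.2)) (hℓ (Fin.natAdd nr p.2)).1 (a (Fin.natAdd nr p.2))
        (b (Fin.natAdd nr p.2))) hCf.le)
  have hσd : (0:ℝ) ≤ 8 * σn ^ 2 * d := by positivity
  have htr : ∀ p, (D p).trace ≤ T := by
    intro p
    have h1 := trace_hessCNN_le hm μ (ξv (Fin.castAdd nf p.1))
      (hy (Fin.castAdd nf p.1)) (hℓ (Fin.castAdd nf p.1))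
      (a (Fin.castAdd nf p.1)) (b (Fin.castAdd nf p.1))
    have h2 := trace_hessCNN_le hm μ (ξv (Fin.natAdd nr p.2))
      (hy (Fin.natAdd nr p.2)) (hℓ (Fin.natAdd nr p.2))
      (a (Fin.natAdd nr p.2)) (b (Fin.natAdd nr p.2))
    have hx1 := hξ (Fin.castAdd nf p.1)
    have hx2 := hξ (Fin.natAdd nr p.2)
    rw [hD_def]
    unfold DrfCNN
    rw [Matrix.trace_add, Matrix.trace_smul, Matrix.trace_smul, smul_eq_mul, smul_eq_mul]
    have b1 : (hessCNN d mfil μ (ξv (Fin.castAdd nf p.1)) (y (Fin.castAdd nf p.1))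
        (ℓ (Fin.castAdd nf p.1)) (a (Fin.castAdd nf p.1)) (b (Fin.castAdd nf p.1))).trace ≤ T := by
      rw [hT_def]; nlinarith
    have b2 : (hessCNN d mfil μ (ξv (Fin.natAdd nr p.2)) (y (Fin.natAdd nr p.2))
        (ℓ (Fin.natAdd nr p.2)) (a (Fin.natAdd nr p.2)) (b (Fin.natAdd nr p.2))).trace ≤ T := by
      rw [hT_def]; nlinarith
    have t1 := trace_nonneg_of_posSemidef
      (hessCNN_posSemidef d mfil μ (ξv (Fin.castAdd nf p.1)) (y (Fin.castAdd nf p.1))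
        (hℓ (Fin.castAdd nf p.1)).1 (a (Fin.castAdd nf p.1)) (b (Fin.castAdd nf p.1)))
    have t2 := trace_nonneg_of_posSemidef
      (hessCNN_posSemidef d mfil μ (ξv (Fin.natAdd nr p.2)) (y (Fin.natAdd nr p.2))
        (hℓ (Fin.natAdd nr p.2)).1 (a (Fin.natAdd nr p.2)) (b (Fin.natAdd nr p.2)))
    nlinarith
  have hT0 : 0 ≤ T := by rw [hT_def]; positivity
  have hentry : ∀ p q, |SmatCNN d mfil nr nf μ ξv y ℓ a b Cr' Cf' p q| ≤ T := by
    intro p q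
    have hnn : 0 ≤ SmatCNN d mfil nr nf μ ξv y ℓ a b Cr' Cf' p q := frob_nonneg _
    rw [abs_of_nonneg hnn]
    exact frob_psdSqrt_mul_le (hPSD p) (hPSD q) (htr p) (htr q)
  have hherm : (SmatCNN d mfil nr nf μ ξv y ℓ a b Cr' Cf').IsHermitian := by
    rw [Matrix.IsHermitian]
    ext p q
    rw [Matrix.conjTranspose_apply, star_trivial]
    show frob _ = frob _
    rw [← frob_transpose (psdSqrt (D q) * psdSqrt (D p)), Matrix.transpose_mul,
      psdSqrt_transpose (hPSD p), psdSqrt_transpose (hPSD q)]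
  have hcard : (Fintype.card (Fin nr × Fin nf) : ℝ) = (nr : ℝ) * nf := by
    simp [Fintype.card_prod]
  calc lamMax (SmatCNN d mfil nr nf μ ξv y ℓ a b Cr' Cf')
      ≤ (Fintype.card (Fin nr × Fin nf) : ℝ) * T :=
        lamMax_le_of_abs_entries_le hherm hT0 hentry
    _ = (nr : ℝ) * nf * (32 * ((∑ c, μ c ^ 2) + 8 * σn ^ 2 * d)) / 8 := by
        rw [hcard, hT_def]; ring
    _ ≤ (nr : ℝ) * nf * (32 * ((∑ c, μ c ^ 2) + 8 * σn ^ 2 * d)) := by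
        apply div_le_self (by positivity) (by norm_num)

end CNNHelpers

/-! ### Probabilistic helper lemmas -/

section ProbHelpers

open MeasureTheory ProbabilityTheory
open scoped NNReal ENNReal

variable {Ω : Type} [MeasurableSpace Ω] {P : Measure Ω}

lemma aemeasurable_of_map_gaussian {f : Ω → ℝ} {m : ℝ} {v : ℝ≥0}
    (h : Measure.map f P = gaussianReal m v) : AEMeasurable f P := by
  by_contra hf
  rw [Measure.map_of_not_aemeasurable hf] at h
  have h1 : (gaussianReal m v) Set.univ = 1 := measure_univ
  rw [← h] at h1
  simp at h1

lemma gaussian_exp_aux {v : ℝ≥0} (hv : 0 < (v : ℝ)) :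
    (fun x : ℝ => gaussianPDFReal 0 v x * Real.exp ((4 * (v : ℝ))⁻¹ * x ^ 2))
      = fun x => (Real.sqrt (2 * Real.pi * v))⁻¹
          * Real.exp (-(4 * (v : ℝ))⁻¹ * x ^ 2) := by
  funext x
  rw [gaussianPDFReal, mul_assoc, ← Real.exp_add]
  congr 2
  have hv0 : (v : ℝ) ≠ 0 := hv.ne'
  field_simp
  ring

lemma integral_exp_gaussian {v : ℝ≥0} (hv : 0 < (v : ℝ)) :
    ∫ x, Real.exp ((4 * (v : ℝ))⁻¹ * x ^ 2) ∂(gaussianReal 0 v) = Real.sqrt 2 := by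
  have hv0 : v ≠ 0 := fun h => by simp [h] at hv
  have hpdf_meas : Measurable fun x => (gaussianPDFReal 0 v x).toNNReal :=
    (measurable_gaussianPDFReal 0 v).real_toNNReal
  rw [gaussianReal_of_var_ne_zero 0 hv0]
  have hdens : Measure.withDensity volume (gaussianPDF 0 v)
      = Measure.withDensity volume fun x => ((gaussianPDFReal 0 v x).toNNReal : ℝ≥0∞) := rfl
  rw [hdens, integral_withDensity_eq_integral_smul hpdf_meas]
  have hsm : (fun x => (gaussianPDFReal 0 v x).toNNReal • Real.exp ((4 * (v:ℝ))⁻¹ * x ^ 2))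
      = fun x => gaussianPDFReal 0 v x * Real.exp ((4 * (v:ℝ))⁻¹ * x ^ 2) := by
    funext x
    rw [NNReal.smul_def, Real.coe_toNNReal _ (gaussianPDFReal_nonneg 0 v x), smul_eq_mul]
  rw [hsm, gaussian_exp_aux hv, MeasureTheory.integral_const_mul, integral_gaussian]
  have h1 : Real.pi / ((4 * (v:ℝ))⁻¹) = 2 * (2 * Real.pi * v) := by
    field_simp
    ring
  rw [h1, Real.sqrt_mul (by norm_num : (0:ℝ) ≤ 2)]
  have h2 : Real.sqrt (2 * Real.pi * v) ≠ 0 := by positivity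
  rw [mul_comm (Real.sqrt 2), ← mul_assoc, inv_mul_cancel₀ h2, one_mul]

lemma integrable_exp_gaussian {v : ℝ≥0} (hv : 0 < (v : ℝ)) :
    Integrable (fun x => Real.exp ((4 * (v : ℝ))⁻¹ * x ^ 2)) (gaussianReal 0 v) := by
  have hv0 : v ≠ 0 := fun h => by simp [h] at hv
  have hpdf_meas : Measurable fun x => (gaussianPDFReal 0 v x).toNNReal :=
    (measurable_gaussianPDFReal 0 v).real_toNNReal
  rw [gaussianReal_of_var_ne_zero 0 hv0]
  have hdens : Measure.withDensity volume (gaussianPDF 0 v)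
      = Measure.withDensity volume fun x => ((gaussianPDFReal 0 v x).toNNReal : ℝ≥0∞) := rfl
  rw [hdens, integrable_withDensity_iff_integrable_smul hpdf_meas]
  have hsm : (fun x => (gaussianPDFReal 0 v x).toNNReal • Real.exp ((4 * (v:ℝ))⁻¹ * x ^ 2))
      = fun x => (Real.sqrt (2 * Real.pi * v))⁻¹ * Real.exp (-(4 * (v:ℝ))⁻¹ * x ^ 2) := by
    funext x
    rw [NNReal.smul_def, Real.coe_toNNReal _ (gaussianPDFReal_nonneg 0 v x), smul_eq_mul]
    exact congrFun (gaussian_exp_aux hv) x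
  rw [hsm]
  exact (integrable_exp_neg_mul_sq (by positivity)).const_mul _

lemma mgf_sq_gaussian {f : Ω → ℝ} {v : ℝ≥0} (hv : 0 < (v : ℝ)) (hf : AEMeasurable f P)
    (h : Measure.map f P = gaussianReal 0 v) :
    mgf (fun ω => (f ω) ^ 2) P ((4 * (v : ℝ))⁻¹) = Real.sqrt 2 := by
  have hg : AEStronglyMeasurable (fun x : ℝ => Real.exp ((4 * (v:ℝ))⁻¹ * x ^ 2))
      (Measure.map f P) :=
    (Real.continuous_exp.comp (by fun_prop)).aestronglyMeasurable
  rw [mgf]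
  have : ∫ ω, Real.exp ((4 * (v:ℝ))⁻¹ * (f ω) ^ 2) ∂P
      = ∫ x, Real.exp ((4 * (v:ℝ))⁻¹ * x ^ 2) ∂(Measure.map f P) :=
    (integral_map hf hg).symm
  rw [this, h, integral_exp_gaussian hv]

lemma integrable_exp_sq_gaussian {f : Ω → ℝ} {v : ℝ≥0} (hv : 0 < (v : ℝ))
    (hf : AEMeasurable f P) (h : Measure.map f P = gaussianReal 0 v) :
    Integrable (fun ω => Real.exp ((4 * (v : ℝ))⁻¹ * (f ω) ^ 2)) P := by
  have hg : AEStronglyMeasurable (fun x : ℝ => Real.exp ((4 * (v:ℝ))⁻¹ * x ^ 2))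
      (Measure.map f P) :=
    (Real.continuous_exp.comp (by fun_prop)).aestronglyMeasurable
  have := (integrable_map_measure hg hf).mp (by rw [h]; exact integrable_exp_gaussian hv)
  exact this

lemma iIndepFun_congr {ι : Type*} [Countable ι] {f g : ι → Ω → ℝ}
    (hf : iIndepFun f P) (h : ∀ i, f i =ᵐ[P] g i) :
    iIndepFun g P := by
  rw [iIndepFun_iff_measure_inter_preimage_eq_mul] at hf ⊢
  intro S sets hsets
  have hae : ∀ᵐ ω ∂P, ∀ i, f i ω = g i ω := ae_all_iff.mpr h
  have h1 : P (⋂ i ∈ S, g i ⁻¹' sets i) = P (⋂ i ∈ S, f i ⁻¹' sets i) := by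
    apply measure_congr
    rw [Filter.eventuallyEq_set]
    filter_upwards [hae] with ω hω
    simp only [Set.mem_iInter, Set.mem_preimage]
    constructor
    · intro hx i hi; rw [hω i]; exact hx i hi
    · intro hx i hi; rw [← hω i]; exact hx i hi
  have h2 : ∀ i, P (g i ⁻¹' sets i) = P (f i ⁻¹' sets i) := by
    intro i
    apply measure_congr
    rw [Filter.eventuallyEq_set]
    filter_upwards [h i] with ω hω
    simp only [Set.mem_preimage, hω]
  rw [h1, hf S hsets]
  exact Finset.prod_congr rfl fun i _ => (h2 i).symm

lemma iIndepFun_precomp {ι κ : Type*} {f : ι → Ω → ℝ} (g : κ → ι)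
    (hg : Function.Injective g) [Nonempty κ]
    (hf : iIndepFun f P) :
    iIndepFun (fun k => f (g k)) P := by
  classical
  rw [iIndepFun_iff_measure_inter_preimage_eq_mul] at hf ⊢
  intro S sets hsets
  have hmeas' : ∀ i ∈ S.image g, MeasurableSet (sets (Function.invFun g i)) := by
    intro i hi
    obtain ⟨k, hk, rfl⟩ := Finset.mem_image.mp hi
    rw [Function.leftInverse_invFun hg k]
    exact hsets k hk
  have key := hf (S.image g) hmeas'
  have him : (⋂ i ∈ S.image g, f i ⁻¹' sets (Function.invFun g i))
      = ⋂ k ∈ S, f (g k) ⁻¹' sets k := by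
    ext ω
    simp only [Set.mem_iInter, Finset.mem_image, forall_exists_index, and_imp]
    constructor
    · intro hx k hk
      have := hx (g k) k hk rfl
      rwa [Function.leftInverse_invFun hg k] at this
    · rintro hx i k hk rfl
      rw [Function.leftInverse_invFun hg k]
      exact hx k hk
  rw [him] at key
  rw [key, Finset.prod_image fun k _ k' _ hkk => hg hkk]
  refine Finset.prod_congr rfl fun k _ => ?_
  rw [Function.leftInverse_invFun hg k]

lemma gaussian_sum_sq_tail {d : ℕ} (hd : 0 < d) {v : ℝ≥0} (hv : 0 < (v : ℝ))
    [IsProbabilityMeasure P] {f : Fin d → Ω → ℝ}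
    (hmeas : ∀ c, Measurable (f c))
    (hind : iIndepFun f P)
    (hmap : ∀ c, Measure.map (f c) P = gaussianReal 0 v) :
    (P {ω | 8 * (v : ℝ) * d ≤ ∑ c, (f c ω) ^ 2}).toReal ≤ Real.exp (-(d : ℝ)) := by
  set t : ℝ := (4 * (v : ℝ))⁻¹ with ht_def
  set Y : Fin d → Ω → ℝ := fun c ω => (f c ω) ^ 2 with hY_def
  have hYmeas : ∀ c, Measurable (Y c) := fun c => (hmeas c).pow_const 2
  have hYind : iIndepFun Y P :=
    hind.comp (fun _ x => x ^ 2) fun _ => measurable_id.pow_const 2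
  have hmgf : ∀ c, mgf (Y c) P t = Real.sqrt 2 := fun c =>
    mgf_sq_gaussian hv (hmeas c).aemeasurable (hmap c)
  have hYint : ∀ c, Integrable (fun ω => Real.exp (t * Y c ω)) P := fun c =>
    integrable_exp_sq_gaussian hv (hmeas c).aemeasurable (hmap c)
  have hint : Integrable (fun ω => Real.exp (t * (∑ c, Y c) ω)) P :=
    hYind.integrable_exp_mul_sum hYmeas fun c _ => hYint c
  have hset : {ω | 8 * (v : ℝ) * d ≤ ∑ c, (f c ω) ^ 2}
      = {ω | 8 * (v : ℝ) * d ≤ (∑ c, Y c) ω} := by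
    ext ω
    simp [hY_def, Finset.sum_apply]
  have hcher := measure_ge_le_exp_mul_mgf (X := ∑ c, Y c) (μ := P)
    (8 * (v : ℝ) * d) (by positivity) hint
  rw [iIndepFun.mgf_sum hYind hYmeas] at hcher
  rw [hset]
  refine le_trans hcher ?_
  have hprod : (∏ c : Fin d, mgf (Y c) P t) = Real.sqrt 2 ^ d := by
    rw [Finset.prod_congr rfl fun c _ => hmgf c, Finset.prod_const, Finset.card_univ,
      Fintype.card_fin]
  rw [hprod]
  have hexp : -t * (8 * (v : ℝ) * d) = -(2 * d) := by
    have hv0 : (v : ℝ) ≠ 0 := hv.ne'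
    rw [ht_def]
    field_simp
    ring
  rw [hexp]
  have hs2 : Real.sqrt 2 ≤ Real.exp 1 := by
    have h1 : Real.sqrt 2 ≤ 2 := by
      nlinarith [Real.sq_sqrt (by norm_num : (0:ℝ) ≤ 2), Real.sqrt_nonneg 2]
    have h2 : (2:ℝ) ≤ Real.exp 1 := by
      have := Real.add_one_le_exp 1
      linarith
    linarith
  calc Real.exp (-(2 * d)) * Real.sqrt 2 ^ d
      ≤ Real.exp (-(2 * d)) * Real.exp 1 ^ d := by
        apply mul_le_mul_of_nonneg_left _ (Real.exp_pos _).le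
        exact pow_le_pow_left₀ (Real.sqrt_nonneg 2) hs2 d
    _ = Real.exp (-(d : ℝ)) := by
        rw [← Real.exp_nat_mul, ← Real.exp_add]
        congr 1
        ring

end ProbHelpers

set_option maxHeartbeats 1600000 in
open scoped NNReal ENNReal in
open MeasureTheory ProbabilityTheory in
/-- coherence bound in the CNN memorization model, part 1.
There are absolute constants `K, K₀ > 0` such that, with i.i.d. `N(0, σ_n² I_d)` noise,
for every `δ ∈ (0,1)`, whenever `n_r, n_f, d ≥ K₀` and `d ≥ K₀ log((n_r+n_f)/δ)`, with
probability at least `1 − 8δ`, uniformly over labels, weights and indicator bits,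
`λ_max(S) ≤ K n_r n_f d σ_n² ((√C'_r + √C'_f)² SNR² + (C'_r + C'_f))`. -/
theorem stmt5 :
    ∃ K K₀ : ℝ, 0 < K ∧ 0 < K₀ ∧
      ∀ (d nr nf mfil : ℕ), 1 ≤ mfil →
      ∀ (μ : Fin d → ℝ) (σn : ℝ), 0 < σn →
      ∀ (Cr' Cf' : ℝ), 0 < Cr' → 0 < Cf' → Cr' + Cf' = 1 →
      ∀ δ : ℝ, δ ∈ Set.Ioo (0 : ℝ) 1 →
      K₀ ≤ (nr : ℝ) → K₀ ≤ (nf : ℝ) → K₀ ≤ (d : ℝ) →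
      K₀ * Real.log (((nr : ℝ) + nf) / δ) ≤ (d : ℝ) →
      ∀ (Ω : Type) (_ : MeasurableSpace Ω) (P : Measure Ω), IsProbabilityMeasure P →
      ∀ ξ : Fin (nr + nf) → Fin d → Ω → ℝ,
        iIndepFun
          (fun (p : Fin (nr + nf) × Fin d) ω => ξ p.1 p.2 ω) P →
        (∀ i c, Measure.map (ξ i c) P = gaussianReal 0 ⟨σn ^ 2, sq_nonneg σn⟩) →
        ENNReal.ofReal (1 - 8 * δ) ≤
          P {ω | ∀ (y ℓ : Fin (nr + nf) → ℝ)
              (a b : Fin (nr + nf) → Bool → Fin mfil → Bool),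
              (∀ i, y i = 1 ∨ y i = -1) → (∀ i, ℓ i ∈ Set.Icc (0 : ℝ) 1) →
              lamMax (SmatCNN d mfil nr nf μ (fun i c => ξ i c ω) y ℓ a b Cr' Cf') ≤
                K * nr * nf * d * σn ^ 2 *
                  ((Real.sqrt Cr' + Real.sqrt Cf') ^ 2 *
                      (Real.sqrt (∑ c, (μ c) ^ 2) / (σn * Real.sqrt d)) ^ 2
                    + (Cr' + Cf'))} := by
  classical
  refine ⟨256, 1, by norm_num, by norm_num, ?_⟩
  intro d nr nf mfil hm μ σn hσ Cr' Cf' hCr hCf hsum δ hδ hK0nr hK0nf hK0d hK0log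
    Ω mΩ P hP ξ hind hmap
  haveI := hP
  set v : ℝ≥0 := ⟨σn ^ 2, sq_nonneg σn⟩ with hv_def
  have hvcoe : (v : ℝ) = σn ^ 2 := rfl
  have hv : 0 < (v : ℝ) := by rw [hvcoe]; positivity
  have hd1 : 1 ≤ d := by exact_mod_cast hK0d
  have hnr1 : 1 ≤ nr := by exact_mod_cast hK0nr
  have hnf1 : 1 ≤ nf := by exact_mod_cast hK0nf
  haveI : NeZero d := ⟨Nat.one_le_iff_ne_zero.mp hd1⟩
  have hAE : ∀ p : Fin (nr + nf) × Fin d, AEMeasurable (fun ω => ξ p.1 p.2 ω) P :=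
    fun p => aemeasurable_of_map_gaussian (hmap p.1 p.2)
  set ξ' : Fin (nr + nf) × Fin d → Ω → ℝ := fun p => (hAE p).mk _ with hξ'_def
  have hξ'meas : ∀ p, Measurable (ξ' p) := fun p => (hAE p).measurable_mk
  have hξ'ae : ∀ p : Fin (nr + nf) × Fin d, (fun ω => ξ p.1 p.2 ω) =ᵐ[P] ξ' p :=
    fun p => (hAE p).ae_eq_mk
  have hind' : iIndepFun ξ' P :=
    iIndepFun_congr hind hξ'ae
  have hmap' : ∀ p : Fin (nr + nf) × Fin d, Measure.map (ξ' p) P = gaussianReal 0 v := by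
    intro p
    rw [← Measure.map_congr (hξ'ae p)]
    exact hmap p.1 p.2
  have htail : ∀ i : Fin (nr + nf),
      P {ω | 8 * σn ^ 2 * d ≤ ∑ c, (ξ i c ω) ^ 2}
        ≤ ENNReal.ofReal (Real.exp (-(d : ℝ))) := by
    intro i
    have hInj : Function.Injective (fun c : Fin d => ((i, c) : Fin (nr + nf) × Fin d)) := by
      intro c c' hcc
      simpa using congrArg Prod.snd hcc
    have hsub : iIndepFun (fun c => ξ' (i, c)) P :=
      iIndepFun_precomp _ hInj hind'
    have hbound := gaussian_sum_sq_tail (Nat.pos_of_ne_zero (NeZero.ne d)) hv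
      (f := fun c => ξ' (i, c)) (fun c => hξ'meas _) hsub (fun c => hmap' _)
    have hPeq : P {ω | 8 * σn ^ 2 * d ≤ ∑ c, (ξ i c ω) ^ 2}
        = P {ω | 8 * (v : ℝ) * d ≤ ∑ c, (ξ' (i, c) ω) ^ 2} := by
      apply measure_congr
      have hae : ∀ᵐ ω ∂P, ∀ c : Fin d, ξ i c ω = ξ' (i, c) ω :=
        ae_all_iff.mpr fun c => hξ'ae (i, c)
      rw [Filter.eventuallyEq_set]
      filter_upwards [hae] with ω hω
      show (8 * σn ^ 2 * (d:ℝ) ≤ ∑ c, (ξ i c ω) ^ 2)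
        ↔ (8 * (v : ℝ) * (d:ℝ) ≤ ∑ c, (ξ' (i, c) ω) ^ 2)
      have hsum_eq : ∑ c, (ξ i c ω) ^ 2 = ∑ c, (ξ' (i, c) ω) ^ 2 :=
        Finset.sum_congr rfl fun c _ => by rw [hω c]
      rw [hsum_eq, hvcoe]
    rw [hPeq, ← ENNReal.ofReal_toReal (measure_ne_top P _)]
    exact ENNReal.ofReal_le_ofReal hbound
  set G : Set Ω := {ω | ∀ i, ∑ c, (ξ i c ω) ^ 2 < 8 * σn ^ 2 * d} with hG_def
  have hn1 : (1:ℝ) ≤ (nr : ℝ) := hK0nr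
  have hn2 : (1:ℝ) ≤ (nf : ℝ) := hK0nf
  have hkey : ((nr + nf : ℕ) : ℝ) * Real.exp (-(d : ℝ)) ≤ δ := by
    have hn : (0:ℝ) < (nr : ℝ) + nf := by linarith
    have hlog : Real.log (((nr : ℝ) + nf) / δ) ≤ d := by linarith [hK0log]
    have hratio : ((nr : ℝ) + nf) / δ ≤ Real.exp d := by
      have hpos : 0 < ((nr : ℝ) + nf) / δ := div_pos hn hδ.1
      calc ((nr : ℝ) + nf) / δ = Real.exp (Real.log (((nr : ℝ) + nf) / δ)) :=
            (Real.exp_log hpos).symm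
        _ ≤ Real.exp d := Real.exp_le_exp.mpr hlog
    have hle : ((nr : ℝ) + nf) ≤ δ * Real.exp d := by
      rw [div_le_iff₀ hδ.1] at hratio
      linarith
    calc ((nr + nf : ℕ) : ℝ) * Real.exp (-(d : ℝ))
        = ((nr : ℝ) + nf) * Real.exp (-(d : ℝ)) := by push_cast; ring
      _ ≤ (δ * Real.exp d) * Real.exp (-(d : ℝ)) := by
          exact mul_le_mul_of_nonneg_right hle (Real.exp_pos _).le
      _ = δ := by rw [mul_assoc, ← Real.exp_add]; simp
  have hGc : P Gᶜ ≤ ENNReal.ofReal δ := by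
    have hsub : Gᶜ ⊆ ⋃ i, {ω | 8 * σn ^ 2 * d ≤ ∑ c, (ξ i c ω) ^ 2} := by
      intro ω hω
      simp only [hG_def, Set.mem_compl_iff, Set.mem_setOf_eq, not_forall, not_lt] at hω
      obtain ⟨i, hi⟩ := hω
      exact Set.mem_iUnion.mpr ⟨i, hi⟩
    refine le_trans (measure_mono hsub) (le_trans (measure_iUnion_le _) ?_)
    calc ∑' i : Fin (nr + nf), P {ω | 8 * σn ^ 2 * d ≤ ∑ c, (ξ i c ω) ^ 2}
        ≤ ∑' _i : Fin (nr + nf), ENNReal.ofReal (Real.exp (-(d : ℝ))) :=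
          ENNReal.tsum_le_tsum htail
      _ = ((nr + nf : ℕ) : ℝ≥0∞) * ENNReal.ofReal (Real.exp (-(d : ℝ))) := by
          rw [tsum_fintype, Finset.sum_const, Finset.card_univ, Fintype.card_fin,
            nsmul_eq_mul]
      _ = ENNReal.ofReal (((nr + nf : ℕ) : ℝ) * Real.exp (-(d : ℝ))) := by
          rw [ENNReal.ofReal_mul (by positivity)]
          congr 1
          rw [ENNReal.ofReal_natCast]
      _ ≤ ENNReal.ofReal δ := ENNReal.ofReal_le_ofReal hkey
  have hPG : ENNReal.ofReal (1 - 8 * δ) ≤ P G := by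
    have huniv : (1 : ℝ≥0∞) ≤ P G + P Gᶜ := by
      rw [← measure_univ (μ := P), ← Set.union_compl_self G]
      exact measure_union_le G Gᶜ
    have h1 : 1 - ENNReal.ofReal δ ≤ P G := by
      rw [tsub_le_iff_right]
      exact le_trans huniv (add_le_add le_rfl hGc)
    refine le_trans ?_ h1
    calc ENNReal.ofReal (1 - 8 * δ) ≤ ENNReal.ofReal (1 - δ) :=
          ENNReal.ofReal_le_ofReal (by linarith [hδ.1])
      _ = ENNReal.ofReal 1 - ENNReal.ofReal δ := ENNReal.ofReal_sub _ hδ.1.le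
      _ = 1 - ENNReal.ofReal δ := by rw [ENNReal.ofReal_one]
  refine le_trans hPG (measure_mono ?_)
  intro ω hω
  intro y ℓ a b hy hℓ
  have hξb : ∀ i, ∑ c, (ξ i c ω) ^ 2 ≤ 8 * σn ^ 2 * d := fun i => (hω i).le
  have hdet := det_bound d mfil nr nf hm hnr1 hnf1 μ σn Cr' Cf' hCr hCf hsum
    (fun i c => ξ i c ω) hξb y ℓ a b hy hℓ
  refine le_trans hdet ?_
  have hM2 : (0:ℝ) ≤ ∑ c, (μ c) ^ 2 := by positivity
  have hdR : (0:ℝ) < d := by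
    have : (1:ℝ) ≤ d := hK0d
    linarith
  have hσne : σn ≠ 0 := hσ.ne'
  have hdne : (d:ℝ) ≠ 0 := hdR.ne'
  have hR : (Real.sqrt (∑ c, (μ c) ^ 2) / (σn * Real.sqrt d)) ^ 2
      = (∑ c, (μ c) ^ 2) / (σn ^ 2 * d) := by
    rw [div_pow, mul_pow, Real.sq_sqrt hM2, Real.sq_sqrt hdR.le]
  have hbr : 1 ≤ (Real.sqrt Cr' + Real.sqrt Cf') ^ 2 := by
    nlinarith [Real.sq_sqrt hCr.le, Real.sq_sqrt hCf.le, Real.sqrt_nonneg Cr',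
      Real.sqrt_nonneg Cf', hsum]
  have hnrnf : (0:ℝ) ≤ (nr:ℝ) * nf := by positivity
  calc (nr : ℝ) * nf * (32 * ((∑ c, (μ c) ^ 2) + 8 * σn ^ 2 * d))
      ≤ 256 * nr * nf * ((∑ c, (μ c) ^ 2) + σn ^ 2 * d) := by
        nlinarith [mul_nonneg hnrnf hM2]
    _ = 256 * nr * nf * d * σn ^ 2 * ((∑ c, (μ c) ^ 2) / (σn ^ 2 * d) + (Cr' + Cf')) := by
        rw [hsum]
        field_simp
    _ ≤ 256 * nr * nf * d * σn ^ 2 *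
          ((Real.sqrt Cr' + Real.sqrt Cf') ^ 2 *
            (Real.sqrt (∑ c, (μ c) ^ 2) / (σn * Real.sqrt d)) ^ 2 + (Cr' + Cf')) := by
        apply mul_le_mul_of_nonneg_left _ (by positivity)
        rw [hR]
        have hM2d : (0:ℝ) ≤ (∑ c, (μ c) ^ 2) / (σn ^ 2 * d) := by positivity
        nlinarith [hbr, hM2d]

end
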